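/- For any k with 0 ≤ k ≤ n, ∑_{A ⊆ [n], |A| = k} q₁^{k(n-k) - γ(A)} · q₂^{γ(A)} equals the (q₁,q₂)-Gaussian binomial coefficient [n]!/([k]![n-k]!), where γ(A) = |{(i,j) : i ∈ A, j ∈ [n]∖A, i > j}| and [m] = q₁^{m-1} + q₁^{m-2}q₂ + ⋯ + q₂^{m-1}. -/

import Mathlib

open Finset

variable {F : Type*} [Field F]

/-- The `(q₁,q₂)`-integer `[m] = q₁^{m-1} + q₁^{m-2}q₂ + ⋯ + q₂^{m-1}`. -/
def qint (q₁ q₂ : F) (m : ℕ) : F := ∑ a ∈ range m, q₁ ^ a * q₂ ^ (m - 1 - a)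

/-- The `(q₁,q₂)`-factorial `[m]! = [1][2]⋯[m]`. -/
def qfac (q₁ q₂ : F) (m : ℕ) : F := ∏ i ∈ range m, qint q₁ q₂ (i + 1)

/-- The `(q₁,q₂)`-Gaussian binomial coefficient `[n]!/([k]![n-k]!)`. -/
def qbin (q₁ q₂ : F) (n k : ℕ) : F := qfac q₁ q₂ n / (qfac q₁ q₂ k * qfac q₁ q₂ (n - k))

/-- `γ(A) = |{(i,j) : i ∈ A, j ∈ [n]∖A, i > j}|`. -/
def gam {n : ℕ} (A : Finset (Fin n)) : ℕ :=
  (univ.filter fun p : Fin n × Fin n => p.1 ∈ A ∧ p.2 ∉ A ∧ p.2 < p.1).card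

/-! ### Auxiliary algebraic lemmas -/

lemma qint_add (q₁ q₂ : F) (a b : ℕ) :
    qint q₁ q₂ (a + b) = q₁ ^ a * qint q₁ q₂ b + q₂ ^ b * qint q₁ q₂ a := by
  unfold qint
  rw [sum_range_add, mul_sum, mul_sum, add_comm]
  congr 1
  · apply sum_congr rfl
    intro c hc
    rw [mem_range] at hc
    have h1 : a + b - 1 - (a + c) = b - 1 - c := by omega
    rw [h1, pow_add]
    ring
  · apply sum_congr rfl
    intro c hc
    rw [mem_range] at hc
    have h1 : a + b - 1 - c = b + (a - 1 - c) := by omega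
    rw [h1, pow_add]
    ring

lemma qfac_succ (q₁ q₂ : F) (m : ℕ) : qfac q₁ q₂ (m + 1) = qfac q₁ q₂ m * qint q₁ q₂ (m + 1) := by
  unfold qfac; rw [prod_range_succ]

lemma qfac_ne_zero {q₁ q₂ : F} (hq : ∀ m : ℕ, 1 ≤ m → qint q₁ q₂ m ≠ 0) (m : ℕ) :
    qfac q₁ q₂ m ≠ 0 := by
  unfold qfac
  exact prod_ne_zero_iff.2 fun i _ => hq (i + 1) (Nat.le_add_left 1 i)

lemma qbin_zero {q₁ q₂ : F} (hq : ∀ m : ℕ, 1 ≤ m → qint q₁ q₂ m ≠ 0) (n : ℕ) :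
    qbin q₁ q₂ n 0 = 1 := by
  unfold qbin
  rw [show qfac q₁ q₂ 0 = 1 from rfl, one_mul, Nat.sub_zero,
    div_self (qfac_ne_zero hq n)]

lemma qbin_self {q₁ q₂ : F} (hq : ∀ m : ℕ, 1 ≤ m → qint q₁ q₂ m ≠ 0) (n : ℕ) :
    qbin q₁ q₂ n n = 1 := by
  unfold qbin
  rw [Nat.sub_self, show qfac q₁ q₂ 0 = 1 from rfl, mul_one,
    div_self (qfac_ne_zero hq n)]

lemma qbin_rec {q₁ q₂ : F} (hq : ∀ m : ℕ, 1 ≤ m → qint q₁ q₂ m ≠ 0) {n k : ℕ} (h : k < n) :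
    qbin q₁ q₂ (n + 1) (k + 1)
      = q₁ ^ (k + 1) * qbin q₁ q₂ n (k + 1) + q₂ ^ (n - k) * qbin q₁ q₂ n k := by
  have h1 : n + 1 - (k + 1) = n - k := by omega
  have h2 : n - (k + 1) = (n - k) - 1 := by omega
  have h3 : n - k = (n - k - 1) + 1 := by omega
  have h4 : n + 1 = (k + 1) + (n - k) := by omega
  unfold qbin
  rw [h1, h2]
  have hfn := qfac_ne_zero hq n
  have hfk := qfac_ne_zero hq k
  have hfk1 := qfac_ne_zero hq (k+1)
  have hfnk := qfac_ne_zero hq (n-k)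
  have hfnk1 := qfac_ne_zero hq (n-k-1)
  have e1 : qfac q₁ q₂ (n + 1) = qfac q₁ q₂ n * qint q₁ q₂ (n + 1) := qfac_succ ..
  have e2 : qfac q₁ q₂ (n - k) = qfac q₁ q₂ (n - k - 1) * qint q₁ q₂ (n - k) := by
    rw [h3, qfac_succ, ← h3]
  have e3 : qfac q₁ q₂ (k + 1) = qfac q₁ q₂ k * qint q₁ q₂ (k + 1) := qfac_succ ..
  have e4 : qint q₁ q₂ (n + 1) = q₁ ^ (k+1) * qint q₁ q₂ (n - k) + q₂ ^ (n-k) * qint q₁ q₂ (k+1) := by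
    rw [h4]; exact qint_add ..
  rw [e1, e4]
  field_simp
  rw [e2, e3]
  ring

/-! ### Auxiliary combinatorial lemmas -/

lemma gam_le {n : ℕ} (A : Finset (Fin n)) : gam A ≤ A.card * (n - A.card) := by
  unfold gam
  have hsub : (univ.filter fun p : Fin n × Fin n => p.1 ∈ A ∧ p.2 ∉ A ∧ p.2 < p.1)
      ⊆ A ×ˢ Aᶜ := by
    intro p hp
    simp only [mem_filter] at hp
    simp [mem_product, hp.2.1, hp.2.2.1]
  calc _ ≤ (A ×ˢ Aᶜ).card := card_le_card hsub
    _ = A.card * (n - A.card) := by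
        rw [card_product, card_compl, Fintype.card_fin]

lemma gam_map {n : ℕ} (A : Finset (Fin n)) :
    gam (A.map Fin.castSuccEmb) = gam A := by
  unfold gam
  symm
  apply Finset.card_bij (fun p _ => (Fin.castSucc p.1, Fin.castSucc p.2))
  · intro p hp
    simp only [mem_filter, mem_univ, true_and] at hp ⊢
    refine ⟨?_, ?_, ?_⟩
    · simp only [mem_map, Fin.castSuccEmb]
      exact ⟨p.1, hp.1, rfl⟩
    · simp only [mem_map, Fin.castSuccEmb]
      rintro ⟨j, hj, hje⟩
      have : j = p.2 := Fin.castSucc_injective _ hje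
      exact hp.2.1 (this ▸ hj)
    · exact Fin.castSucc_lt_castSucc_iff.2 hp.2.2
  · intro p hp q hq h
    simp only [Prod.mk.injEq] at h
    exact Prod.ext (Fin.castSucc_injective _ h.1) (Fin.castSucc_injective _ h.2)
  · intro b hb
    simp only [mem_filter, mem_univ, true_and, mem_map] at hb
    obtain ⟨⟨i, hi, hie⟩, hb2, hlt⟩ := hb
    have hb1lt : b.1 = Fin.castSucc i := hie.symm
    have h2lt : b.2 < Fin.last n := lt_of_lt_of_le hlt (by rw [hb1lt]; exact (Fin.castSucc_lt_last i).le)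
    obtain ⟨j, hje⟩ := Fin.exists_castSucc_eq.2 (Fin.ne_last_of_lt h2lt)
    refine ⟨(i, j), ?_, ?_⟩
    · simp only [mem_filter, mem_univ, true_and]
      refine ⟨hi, ?_, ?_⟩
      · intro hj
        exact hb2 ⟨j, hj, hje⟩
      · rw [← Fin.castSucc_lt_castSucc_iff, hje, ← hb1lt]; exact hlt
    · rw [Prod.ext_iff]; exact ⟨hb1lt.symm, hje⟩

lemma gam_insert_last {n : ℕ} (A : Finset (Fin n)) :
    gam (insert (Fin.last n) (A.map Fin.castSuccEmb)) = gam A + (n - A.card) := by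
  classical
  set B := insert (Fin.last n) (A.map Fin.castSuccEmb) with hB
  have hmemB : ∀ x : Fin n, Fin.castSucc x ∈ B ↔ x ∈ A := by
    intro x
    simp only [hB, mem_insert, mem_map, Fin.castSuccEmb, Function.Embedding.coeFn_mk]
    constructor
    · rintro (h | ⟨j, hj, hje⟩)
      · exact absurd h (Fin.castSucc_lt_last x).ne
      · exact (Fin.castSucc_injective _ hje) ▸ hj
    · intro h; exact Or.inr ⟨x, h, rfl⟩
  set T := (univ.filter fun p : Fin (n+1) × Fin (n+1) => p.1 ∈ B ∧ p.2 ∉ B ∧ p.2 < p.1) with hT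
  have h1 : (T.filter fun p => p.1 = Fin.last n).card = n - A.card := by
    have hAc : (univ.filter fun j : Fin n => j ∉ A).card = n - A.card := by
      have : (univ.filter fun j : Fin n => j ∉ A) = Aᶜ := by ext j; simp
      rw [this, card_compl, Fintype.card_fin]
    rw [← hAc]
    symm
    apply Finset.card_bij (fun j _ => (Fin.last n, Fin.castSucc j))
    · intro j hj
      simp only [hT, mem_filter, mem_univ, true_and] at hj ⊢
      refine ⟨⟨mem_insert_self _ _, ?_, Fin.castSucc_lt_last j⟩, trivial⟩
      rw [hmemB]; exact hj
    · intro a ha b hb h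
      simp only [Prod.mk.injEq] at h
      exact Fin.castSucc_injective _ h.2
    · intro b hb
      simp only [hT, mem_filter, mem_univ, true_and] at hb
      obtain ⟨⟨hb1, hb2, hlt⟩, hlast⟩ := hb
      have h2lt : b.2 < Fin.last n := hlast ▸ hlt
      obtain ⟨j, hje⟩ := Fin.exists_castSucc_eq.2 (Fin.ne_last_of_lt h2lt)
      refine ⟨j, ?_, ?_⟩
      · simp only [mem_filter, mem_univ, true_and]
        intro hj
        exact hb2 (hje ▸ (hmemB j).2 hj)
      · rw [Prod.ext_iff]; exact ⟨hlast.symm, hje⟩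
  have h2 : (T.filter fun p => ¬ p.1 = Fin.last n).card = gam A := by
    symm
    unfold gam
    apply Finset.card_bij (fun p _ => (Fin.castSucc p.1, Fin.castSucc p.2))
    · intro p hp
      simp only [hT, mem_filter, mem_univ, true_and] at hp ⊢
      obtain ⟨h1, h2, h3⟩ := hp
      refine ⟨⟨(hmemB _).2 h1, fun h => h2 ((hmemB _).1 h), Fin.castSucc_lt_castSucc_iff.2 h3⟩,
        (Fin.castSucc_lt_last _).ne⟩
    · intro a ha b hb h
      simp only [Prod.mk.injEq] at h
      exact Prod.ext (Fin.castSucc_injective _ h.1) (Fin.castSucc_injective _ h.2)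
    · intro b hb
      simp only [hT, mem_filter, mem_univ, true_and] at hb
      obtain ⟨⟨hb1, hb2, hlt⟩, hlast⟩ := hb
      obtain ⟨i, hie⟩ := Fin.exists_castSucc_eq.2 hlast
      have h2lt : b.2 < Fin.last n := lt_of_lt_of_le hlt (by rw [← hie]; exact (Fin.castSucc_lt_last i).le)
      obtain ⟨j, hje⟩ := Fin.exists_castSucc_eq.2 (Fin.ne_last_of_lt h2lt)
      refine ⟨(i, j), ?_, ?_⟩
      · simp only [mem_filter, mem_univ, true_and]
        refine ⟨(hmemB i).1 (hie ▸ hb1), fun hj => hb2 (hje ▸ (hmemB j).2 hj), ?_⟩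
        rw [← Fin.castSucc_lt_castSucc_iff, hje, hie]; exact hlt
      · rw [Prod.ext_iff]; exact ⟨hie, hje⟩
  have h3 := Finset.card_filter_add_card_filter_not
    (s := T) (p := fun p : Fin (n+1) × Fin (n+1) => p.1 = Fin.last n)
  have h4 : gam B = T.card := by unfold gam; rw [hT]
  omega

lemma gam_empty {n : ℕ} : gam (∅ : Finset (Fin n)) = 0 := by simp [gam]
lemma gam_univ {n : ℕ} : gam (univ : Finset (Fin n)) = 0 := by simp [gam]

/-- For `0 ≤ k ≤ n`,
`∑_{A ⊆ [n], |A| = k} q₁^{k(n-k) - γ(A)} q₂^{γ(A)} = [n]!/([k]![n-k]!)`.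
This identity of polynomials in `q₁, q₂` is stated over an arbitrary field in which
the `(q₁,q₂)`-integers are nonzero (e.g. the rational function field `ℚ(q₁,q₂)`). -/
theorem gaussian_binomial_gamma (q₁ q₂ : F)
    (hq : ∀ m : ℕ, 1 ≤ m → qint q₁ q₂ m ≠ 0) (n k : ℕ) (hk : k ≤ n) :
    ∑ A ∈ powersetCard k (univ : Finset (Fin n)),
        q₁ ^ (k * (n - k) - gam A) * q₂ ^ (gam A) =
      qbin q₁ q₂ n k := by
  induction n generalizing k with
  | zero =>
    interval_cases k
    simp [gam_empty, qbin_zero hq]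
  | succ n ih =>
    rcases k with _ | k
    · simp [gam_empty, qbin_zero hq]
    by_cases hkn : k = n
    · subst hkn
      have huniv : powersetCard (k + 1) (univ : Finset (Fin (k+1))) = {univ} := by
        have := powersetCard_self (univ : Finset (Fin (k+1)))
        rwa [card_univ, Fintype.card_fin] at this
      rw [huniv]
      simp [gam_univ, qbin_self hq]
    have hkn' : k < n := lt_of_le_of_ne (by omega) hkn
    classical
    have hlast : Fin.last n ∉ (univ : Finset (Fin n)).map Fin.castSuccEmb := by
      simp only [mem_map, mem_univ, true_and, not_exists]
      intro j
      exact fun h => (Fin.castSucc_lt_last j).ne h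
    rw [Fin.univ_castSuccEmb, cons_eq_insert, powersetCard_succ_insert hlast]
    have hdisj : Disjoint (powersetCard (k+1) ((univ : Finset (Fin n)).map Fin.castSuccEmb))
        (((univ : Finset (Fin n)).map Fin.castSuccEmb).powersetCard k |>.image (insert (Fin.last n))) := by
      rw [disjoint_left]
      intro B hB hB'
      simp only [mem_powersetCard] at hB
      simp only [mem_image] at hB'
      obtain ⟨C, hC, hCe⟩ := hB'
      exact hlast (hB.1 (hCe ▸ mem_insert_self _ _))
    rw [sum_union hdisj]
    have hS1 : ∑ B ∈ powersetCard (k+1) ((univ : Finset (Fin n)).map Fin.castSuccEmb),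
        q₁ ^ ((k+1) * (n + 1 - (k+1)) - gam B) * q₂ ^ (gam B)
        = q₁ ^ (k+1) * ∑ A ∈ powersetCard (k+1) (univ : Finset (Fin n)),
            q₁ ^ ((k+1) * (n - (k+1)) - gam A) * q₂ ^ (gam A) := by
      rw [powersetCard_map, sum_map, mul_sum]
      apply sum_congr rfl
      intro A hA
      rw [mem_powersetCard] at hA
      have hcard : A.card = k + 1 := hA.2
      have hle := gam_le A
      rw [hcard] at hle
      have hmap : (Finset.mapEmbedding Fin.castSuccEmb).toEmbedding A
          = A.map Fin.castSuccEmb := rfl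
      rw [hmap, gam_map]
      have hexp : (k+1) * (n + 1 - (k+1)) - gam A = (k+1) + ((k+1) * (n - (k+1)) - gam A) := by
        have hmul : (k+1) * (n + 1 - (k+1)) = (k+1) * (n - (k+1)) + (k+1) := by
          rw [show n + 1 - (k+1) = (n - (k+1)) + 1 by omega]; ring
        obtain ⟨M, hM⟩ : ∃ M, (k+1) * (n - (k+1)) = M := ⟨_, rfl⟩
        rw [hM] at hle hmul
        omega
      rw [hexp, pow_add, mul_assoc]
    have hS2 : ∑ B ∈ (((univ : Finset (Fin n)).map Fin.castSuccEmb).powersetCard k).image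
          (insert (Fin.last n)),
        q₁ ^ ((k+1) * (n + 1 - (k+1)) - gam B) * q₂ ^ (gam B)
        = q₂ ^ (n - k) * ∑ A ∈ powersetCard k (univ : Finset (Fin n)),
            q₁ ^ (k * (n - k) - gam A) * q₂ ^ (gam A) := by
      rw [sum_image, powersetCard_map, sum_map, mul_sum]
      · apply sum_congr rfl
        intro A hA
        rw [mem_powersetCard] at hA
        have hcard : A.card = k := hA.2
        have hle := gam_le A
        rw [hcard] at hle
        have hmap : (Finset.mapEmbedding Fin.castSuccEmb).toEmbedding A
            = A.map Fin.castSuccEmb := rfl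
        rw [hmap, gam_insert_last, hcard]
        have hexp : (k+1) * (n + 1 - (k+1)) - (gam A + (n - k))
            = k * (n - k) - gam A := by
          have hmul : (k+1) * (n + 1 - (k+1)) = k * (n - k) + (n - k) := by
            rw [show n + 1 - (k+1) = n - k by omega]; ring
          obtain ⟨M, hM⟩ : ∃ M, k * (n - k) = M := ⟨_, rfl⟩
          rw [hM] at hle hmul
          omega
        rw [hexp, pow_add]
        ring
      · intro B hB C hC h
        rw [mem_coe, mem_powersetCard] at hB hC
        have hBl : Fin.last n ∉ B := fun hx => hlast (hB.1 hx)
        have hCl : Fin.last n ∉ C := fun hx => hlast (hC.1 hx)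
        rw [← erase_insert hBl, ← erase_insert hCl, h]
    rw [hS1, hS2, ih (k+1) hkn', ih k (le_of_lt hkn'), qbin_rec hq hkn']
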